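/- For symmetric positive definite k×k matrices Σ_a, Σ_b and t ∈ [0,1], with Σ̃_t the geodesic path and Σ*_t = ((1-t)Σ_a^{-1} + tΣ_b^{-1})^{-1} the harmonic path, it holds that λ_k(Σ̃_t) ≥ λ_k(Σ*_t) ≥ min(λ_k(Σ_a), λ_k(Σ_b)), where λ_k denotes the smallest eigenvalue. -/

import Mathlib

open MeasureTheory Matrix

/-- Largest "eigenvalue" via the Rayleigh quotient (equals the largest eigenvalue
for symmetric matrices). -/
noncomputable def lamMax {k : ℕ} (A : Matrix (Fin k) (Fin k) ℝ) : ℝ :=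
  ⨆ u : {u : Fin k → ℝ // u ⬝ᵥ u = 1}, u.1 ⬝ᵥ A *ᵥ u.1

/-- Smallest "eigenvalue" via the Rayleigh quotient. -/
noncomputable def lamMin {k : ℕ} (A : Matrix (Fin k) (Fin k) ℝ) : ℝ :=
  ⨅ u : {u : Fin k → ℝ // u ⬝ᵥ u = 1}, u.1 ⬝ᵥ A *ᵥ u.1

/-- The scatter halfspace depth of a scatter matrix `Sg` w.r.t. the probability
measure `P`, with location `T`. -/
noncomputable def HD {k : ℕ} (P : Measure (Fin k → ℝ)) (T : Fin k → ℝ)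
    (Sg : Matrix (Fin k) (Fin k) ℝ) : ℝ :=
  ⨅ u : {u : Fin k → ℝ // u ⬝ᵥ u = 1},
    min (P {x | |u.1 ⬝ᵥ (x - T)| ≤ Real.sqrt (u.1 ⬝ᵥ Sg *ᵥ u.1)}).toReal
        (P {x | Real.sqrt (u.1 ⬝ᵥ Sg *ᵥ u.1) ≤ |u.1 ⬝ᵥ (x - T)|}).toReal

/-- Matrix square root via the continuous functional calculus. -/
noncomputable def msqrt {k : ℕ} (A : Matrix (Fin k) (Fin k) ℝ) : Matrix (Fin k) (Fin k) ℝ :=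
  cfc Real.sqrt A

/-- Matrix logarithm via the continuous functional calculus. -/
noncomputable def mlog {k : ℕ} (A : Matrix (Fin k) (Fin k) ℝ) : Matrix (Fin k) (Fin k) ℝ :=
  cfc Real.log A

/-- Matrix real power via the continuous functional calculus. -/
noncomputable def mpow {k : ℕ} (A : Matrix (Fin k) (Fin k) ℝ) (t : ℝ) :
    Matrix (Fin k) (Fin k) ℝ :=
  cfc (fun x : ℝ => x ^ t) A

/-- The geodesic path from `A` to `B` in the space of positive definite matrices. -/
noncomputable def geoPath {k : ℕ} (A B : Matrix (Fin k) (Fin k) ℝ) (t : ℝ) :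
    Matrix (Fin k) (Fin k) ℝ :=
  msqrt A * mpow ((msqrt A)⁻¹ * B * (msqrt A)⁻¹) t * msqrt A

/-- The harmonic path from `A` to `B`. -/
noncomputable def harmPath {k : ℕ} (A B : Matrix (Fin k) (Fin k) ℝ) (t : ℝ) :
    Matrix (Fin k) (Fin k) ℝ :=
  ((1 - t) • A⁻¹ + t • B⁻¹)⁻¹

/-- Frobenius norm of a matrix. -/
noncomputable def frob {k : ℕ} (A : Matrix (Fin k) (Fin k) ℝ) : ℝ :=
  Real.sqrt (∑ i, ∑ j, (A i j) ^ 2)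

/-- Geodesic distance on the space of positive definite matrices. -/
noncomputable def dg {k : ℕ} (A B : Matrix (Fin k) (Fin k) ℝ) : ℝ :=
  frob (mlog ((msqrt A)⁻¹ * B * (msqrt A)⁻¹))

/-- Sign vectors in `{-1,1}^k`. -/
def SignVec (k : ℕ) := {s : Fin k → ℝ // ∀ i, s i = 1 ∨ s i = -1}

namespace PfAux
variable {k : ℕ} {M : Matrix (Fin k) (Fin k) ℝ}

local notation "UU" hM => ((Matrix.IsHermitian.eigenvectorUnitary hM : Matrix (Fin k) (Fin k) ℝ))

lemma cfc_def (hM : M.IsHermitian) (f : ℝ → ℝ) :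
    hM.cfc f = (UU hM) * diagonal (f ∘ hM.eigenvalues) * star (UU hM) := by
  simp [Matrix.IsHermitian.cfc, RCLike.ofReal_real_eq_id, Function.comp_def]

lemma spectral (hM : M.IsHermitian) : M = hM.cfc id := by
  rw [cfc_def]
  simpa [RCLike.ofReal_real_eq_id, Function.comp_def] using hM.spectral_theorem

lemma U_mul_star (hM : M.IsHermitian) : (UU hM) * star (UU hM) = 1 :=
  (Matrix.mem_unitaryGroup_iff).mp (Matrix.IsHermitian.eigenvectorUnitary hM).2

lemma star_mul_U (hM : M.IsHermitian) : star (UU hM) * (UU hM) = 1 :=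
  (Matrix.mem_unitaryGroup_iff').mp (Matrix.IsHermitian.eigenvectorUnitary hM).2

lemma cfc_congr' (hM : M.IsHermitian) {f g : ℝ → ℝ}
    (h : ∀ i, f (hM.eigenvalues i) = g (hM.eigenvalues i)) : hM.cfc f = hM.cfc g := by
  rw [cfc_def, cfc_def]
  congr 2
  ext i j
  by_cases hij : i = j <;> simp [diagonal, hij, h]

lemma cfc_mul' (hM : M.IsHermitian) (f g : ℝ → ℝ) :
    hM.cfc f * hM.cfc g = hM.cfc (fun x => f x * g x) := by
  rw [cfc_def, cfc_def, cfc_def]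
  have : ∀ a b c d e f : Matrix (Fin k) (Fin k) ℝ, (a * b * c) * (d * e * f) = a * (b * (c * d) * e) * f := by
    intros; simp only [mul_assoc]
  rw [this, star_mul_U hM, mul_one, diagonal_mul_diagonal]
  rfl

lemma cfc_one' (hM : M.IsHermitian) : hM.cfc (fun _ => 1) = 1 := by
  rw [cfc_def]
  have : diagonal ((fun _ : ℝ => (1:ℝ)) ∘ hM.eigenvalues) = 1 := by
    simp [Function.comp_def]
  rw [this, mul_one, U_mul_star hM]

lemma cfc_comb (hM : M.IsHermitian) (a b : ℝ) (f g : ℝ → ℝ) :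
    a • hM.cfc f + b • hM.cfc g = hM.cfc (fun x => a * f x + b * g x) := by
  simp only [cfc_def]
  rw [show ∀ X Y : Matrix (Fin k) (Fin k) ℝ, a • ((UU hM) * X * star (UU hM)) + b • ((UU hM) * Y * star (UU hM)) = (UU hM) * (a • X + b • Y) * star (UU hM) by
    intros; simp only [Matrix.smul_mul, Matrix.mul_smul, Matrix.add_mul, Matrix.mul_add],
    ← diagonal_smul, ← diagonal_smul, diagonal_add]
  have : (fun i => (a • f ∘ hM.eigenvalues) i + (b • g ∘ hM.eigenvalues) i)
      = ((fun x => a * f x + b * g x) ∘ hM.eigenvalues) := by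
    ext i; simp [Function.comp_def]
  rw [this, mul_assoc]

lemma cfc_herm (hM : M.IsHermitian) (f : ℝ → ℝ) : (hM.cfc f).IsHermitian := by
  rw [cfc_def, star_eq_conjTranspose]
  exact isHermitian_mul_mul_conjTranspose _ (isHermitian_diagonal _)

lemma cfc_psd (hM : M.IsHermitian) (f : ℝ → ℝ)
    (h : ∀ i, 0 ≤ f (hM.eigenvalues i)) : (hM.cfc f).PosSemidef := by
  rw [cfc_def, star_eq_conjTranspose]
  exact (posSemidef_diagonal_iff.mpr (fun i => h i)).mul_mul_conjTranspose_same _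

lemma cfc_inv (hM : M.IsHermitian) (f : ℝ → ℝ)
    (h : ∀ i, f (hM.eigenvalues i) ≠ 0) : (hM.cfc f)⁻¹ = hM.cfc (fun x => (f x)⁻¹) := by
  apply Matrix.inv_eq_right_inv
  rw [cfc_mul']
  rw [cfc_congr' hM (g := fun _ => 1) (fun i => by field_simp [h i])]
  exact cfc_one' hM

lemma herm_vecMul {X : Matrix (Fin k) (Fin k) ℝ} (hX : X.IsHermitian) (u : Fin k → ℝ) :
    X.vecMul u = X *ᵥ u := by
  conv_rhs => rw [← hX.eq]
  rw [conjTranspose_eq_transpose_of_trivial, mulVec_transpose]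

lemma dot_symm {X : Matrix (Fin k) (Fin k) ℝ} (hX : X.IsHermitian) (u v : Fin k → ℝ) :
    u ⬝ᵥ X *ᵥ v = v ⬝ᵥ X *ᵥ u := by
  rw [dotProduct_mulVec, herm_vecMul hX, dotProduct_comm]

/-- Cauchy-Schwarz for a positive semidefinite symmetric real matrix. -/
lemma cs_psd {W : Matrix (Fin k) (Fin k) ℝ} (hW : W.PosSemidef) (x y : Fin k → ℝ) :
    (x ⬝ᵥ W *ᵥ y) ^ 2 ≤ (x ⬝ᵥ W *ᵥ x) * (y ⬝ᵥ W *ᵥ y) := by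
  have hd : discrim (y ⬝ᵥ W *ᵥ y) (2 * (x ⬝ᵥ W *ᵥ y)) (x ⬝ᵥ W *ᵥ x) ≤ 0 := by
    apply discrim_le_zero
    intro c
    have h0 := hW.dotProduct_mulVec_nonneg (x + c • y)
    rw [star_trivial] at h0
    have hexp : (x + c • y) ⬝ᵥ W *ᵥ (x + c • y)
        = (x ⬝ᵥ W *ᵥ x) + c * (x ⬝ᵥ W *ᵥ y) + c * (y ⬝ᵥ W *ᵥ x) + c * c * (y ⬝ᵥ W *ᵥ y) := by
      simp only [mulVec_add, mulVec_smul, dotProduct_add, add_dotProduct, smul_dotProduct,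
        dotProduct_smul, smul_eq_mul]
      ring
    rw [hexp, dot_symm hW.1 y x] at h0
    calc (0:ℝ) ≤ _ := h0
    _ = (y ⬝ᵥ W *ᵥ y) * (c * c) + 2 * (x ⬝ᵥ W *ᵥ y) * c + (x ⬝ᵥ W *ᵥ x) := by ring
  rw [discrim] at hd
  nlinarith [hd]

/-- quadratic form expansion: `u ⬝ W u = ∑ ev i * c i ^ 2` with `c = star U *ᵥ u`. -/
lemma quadform_eq (hM : M.IsHermitian) (u : Fin k → ℝ) :
    u ⬝ᵥ M *ᵥ u = ∑ i, hM.eigenvalues i * ((star (UU hM)) *ᵥ u) i ^ 2 := by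
  set c := (star (UU hM)) *ᵥ u with hc
  have hvm : (UU hM).vecMul u = c := by
    ext j
    simp [hc, Matrix.vecMul, Matrix.mulVec, dotProduct, star_apply, Matrix.star_apply,
      mul_comm]
  conv_lhs => rw [spectral hM, cfc_def]
  rw [← Matrix.mulVec_mulVec, ← Matrix.mulVec_mulVec, dotProduct_mulVec, hvm]
  simp [dotProduct, mulVec_diagonal]
  exact Finset.sum_congr rfl fun i _ => by ring

lemma sum_sq_c (hM : M.IsHermitian) (u : Fin k → ℝ) :
    ∑ i, ((star (UU hM)) *ᵥ u) i ^ 2 = u ⬝ᵥ u := by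
  set c := (star (UU hM)) *ᵥ u with hc
  have hvm : (UU hM).vecMul u = c := by
    ext j
    simp [hc, Matrix.vecMul, Matrix.mulVec, dotProduct, star_apply, Matrix.star_apply, mul_comm]
  have : ∑ i, c i ^ 2 = c ⬝ᵥ c := by simp [dotProduct, pow_two]
  rw [this]
  nth_rewrite 1 [hc]
  rw [← hvm, dotProduct_comm, ← dotProduct_mulVec, Matrix.mulVec_mulVec, U_mul_star hM, one_mulVec]


instance unitNonempty [NeZero k] : Nonempty {u : Fin k → ℝ // u ⬝ᵥ u = 1} := by
  refine ⟨⟨Pi.single (0 : Fin k) 1, ?_⟩⟩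
  simp [dotProduct, Pi.single_apply]

lemma rayleigh_nonneg {N : Matrix (Fin k) (Fin k) ℝ} (hN : N.PosSemidef) (u : Fin k → ℝ) :
    0 ≤ u ⬝ᵥ N *ᵥ u := by simpa [star_trivial] using hN.dotProduct_mulVec_nonneg u

lemma lamMin_le [NeZero k] {N : Matrix (Fin k) (Fin k) ℝ} (hN : N.PosSemidef)
    {u : Fin k → ℝ} (hu : u ⬝ᵥ u = 1) : lamMin N ≤ u ⬝ᵥ N *ᵥ u := by
  have hb : BddBelow (Set.range fun v : {v : Fin k → ℝ // v ⬝ᵥ v = 1} => v.1 ⬝ᵥ N *ᵥ v.1) :=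
    ⟨0, by rintro x ⟨v, rfl⟩; exact rayleigh_nonneg hN v.1⟩
  exact ciInf_le hb ⟨u, hu⟩

lemma le_lamMin [NeZero k] {N : Matrix (Fin k) (Fin k) ℝ} {c : ℝ}
    (h : ∀ u : Fin k → ℝ, u ⬝ᵥ u = 1 → c ≤ u ⬝ᵥ N *ᵥ u) : c ≤ lamMin N := by
  unfold lamMin
  exact le_ciInf fun u => h u.1 u.2

lemma lamMin_mono [NeZero k] {P N : Matrix (Fin k) (Fin k) ℝ} (hP : P.PosSemidef)
    (h : (N - P).PosSemidef) : lamMin P ≤ lamMin N := by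
  have hb : BddBelow (Set.range fun v : {v : Fin k → ℝ // v ⬝ᵥ v = 1} => v.1 ⬝ᵥ P *ᵥ v.1) :=
    ⟨0, by rintro x ⟨v, rfl⟩; exact rayleigh_nonneg hP v.1⟩
  unfold lamMin
  apply ciInf_mono hb
  intro u
  have := rayleigh_nonneg h u.1
  have hexp : u.1 ⬝ᵥ (N - P) *ᵥ u.1 = u.1 ⬝ᵥ N *ᵥ u.1 - u.1 ⬝ᵥ P *ᵥ u.1 := by
    simp [sub_mulVec, dotProduct_sub]
  linarith [hexp ▸ this]

lemma lamMin_le_eigen [NeZero k] (hM : M.IsHermitian) (hpsd : M.PosSemidef) (i : Fin k) :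
    lamMin M ≤ hM.eigenvalues i := by
  set u := (UU hM) *ᵥ Pi.single i 1 with hu
  have hc : (star (UU hM)) *ᵥ u = Pi.single i 1 := by
    rw [hu, Matrix.mulVec_mulVec, star_mul_U hM, one_mulVec]
  have hunit : u ⬝ᵥ u = 1 := by
    rw [← sum_sq_c hM u, hc]
    simp [Pi.single_apply, Finset.sum_ite_eq']
  have hray : u ⬝ᵥ M *ᵥ u = hM.eigenvalues i := by
    rw [quadform_eq hM u, hc,
      Finset.sum_eq_single i (fun j _ hj => by simp [Pi.single_apply, hj]) (by simp)]
    simp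
  exact hray ▸ lamMin_le hpsd hunit

lemma eigen_le_quadform (hM : M.IsHermitian) {a : ℝ} (ha : ∀ i, a ≤ hM.eigenvalues i)
    {u : Fin k → ℝ} (hu : u ⬝ᵥ u = 1) : a ≤ u ⬝ᵥ M *ᵥ u := by
  calc a = a * (u ⬝ᵥ u) := by rw [hu, mul_one]
  _ = ∑ i, a * ((star (UU hM)) *ᵥ u) i ^ 2 := by rw [← sum_sq_c hM u, Finset.mul_sum]
  _ ≤ ∑ i, hM.eigenvalues i * ((star (UU hM)) *ᵥ u) i ^ 2 :=
      Finset.sum_le_sum fun i _ => mul_le_mul_of_nonneg_right (ha i) (sq_nonneg _)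
  _ = u ⬝ᵥ M *ᵥ u := (quadform_eq hM u).symm


lemma psd_smul {X : Matrix (Fin k) (Fin k) ℝ} (hX : X.PosSemidef) {c : ℝ} (hc : 0 ≤ c) :
    (c • X).PosSemidef := by
  refine Matrix.PosSemidef.of_dotProduct_mulVec_nonneg ?_ (fun x => ?_)
  · unfold Matrix.IsHermitian
    rw [conjTranspose_smul, hX.1]
    simp
  · rw [smul_mulVec, dotProduct_smul]
    exact mul_nonneg hc (hX.dotProduct_mulVec_nonneg x)

lemma conj_sandwich_psd {X S : Matrix (Fin k) (Fin k) ℝ} (hX : X.PosSemidef)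
    (hS : S.IsHermitian) : (S * X * S).PosSemidef := by
  have := hX.mul_mul_conjTranspose_same S
  rwa [hS.eq] at this

lemma comb_sandwich (S X Y : Matrix (Fin k) (Fin k) ℝ) (a b : ℝ) :
    a • (S * X * S) + b • (S * Y * S) = S * (a • X + b • Y) * S := by
  simp only [Matrix.smul_mul, Matrix.mul_smul, Matrix.add_mul, Matrix.mul_add]

end PfAux

open PfAux

/-- along the geodesic and harmonic paths between positive definite
matrices, `λ_k(Σ̃_t) ≥ λ_k(Σ*_t) ≥ min(λ_k(Σ_a), λ_k(Σ_b))`. -/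
theorem lamMin_geoPath_harmPath {k : ℕ} [NeZero k] (A B : Matrix (Fin k) (Fin k) ℝ)
    (hA : A.PosDef) (hB : B.PosDef) (t : ℝ) (ht : t ∈ Set.Icc (0 : ℝ) 1) :
    lamMin (harmPath A B t) ≤ lamMin (geoPath A B t) ∧
      min (lamMin A) (lamMin B) ≤ lamMin (harmPath A B t) := by
  obtain ⟨ht0, ht1⟩ := ht
  have hk : 0 < k := Nat.pos_of_ne_zero (NeZero.ne k)
  haveI : Nonempty (Fin k) := ⟨⟨0, hk⟩⟩
  have hAh : A.IsHermitian := hA.1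
  have hBh : B.IsHermitian := hB.1
  have hAev : ∀ i, 0 < hAh.eigenvalues i := fun i => hA.eigenvalues_pos i
  have hBev : ∀ i, 0 < hBh.eigenvalues i := fun i => hB.eigenvalues_pos i
  set S := msqrt A with hSnote
  have hSdef : S = hAh.cfc Real.sqrt := hAh.cfc_eq Real.sqrt
  have hsqrt_ne : ∀ i, Real.sqrt (hAh.eigenvalues i) ≠ 0 :=
    fun i => ne_of_gt (Real.sqrt_pos.2 (hAev i))
  have hSS : S * S = A := by
    rw [hSdef, cfc_mul' hAh,
      cfc_congr' hAh (g := id) (fun i => Real.mul_self_sqrt (hAev i).le), ← spectral hAh]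
  have hSinv : S⁻¹ = hAh.cfc (fun x => (Real.sqrt x)⁻¹) := by
    rw [hSdef]; exact cfc_inv hAh _ hsqrt_ne
  have hS_herm : S.IsHermitian := hSdef ▸ cfc_herm hAh _
  have hSinv_herm : (S⁻¹).IsHermitian := hSinv ▸ cfc_herm hAh _
  have hS_inv_mul : S⁻¹ * S = 1 := by
    rw [hSinv, hSdef, cfc_mul' hAh,
      cfc_congr' hAh (g := fun _ => 1) (fun i => inv_mul_cancel₀ (hsqrt_ne i)), cfc_one' hAh]
  have hS_mul_inv : S * S⁻¹ = 1 := by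
    rw [hSinv, hSdef, cfc_mul' hAh,
      cfc_congr' hAh (g := fun _ => 1) (fun i => mul_inv_cancel₀ (hsqrt_ne i)), cfc_one' hAh]
  set C := S⁻¹ * B * S⁻¹ with hCdef
  have hCherm : C.IsHermitian := by
    have := isHermitian_mul_mul_conjTranspose (S⁻¹) hBh
    rwa [hSinv_herm.eq] at this
  have hCpd : C.PosDef := by
    refine Matrix.PosDef.of_dotProduct_mulVec_pos hCherm (fun u hu => ?_)
    rw [star_trivial]
    have h1 : u ⬝ᵥ C *ᵥ u = (S⁻¹ *ᵥ u) ⬝ᵥ B *ᵥ (S⁻¹ *ᵥ u) := by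
      rw [hCdef, ← Matrix.mulVec_mulVec, ← Matrix.mulVec_mulVec, dotProduct_mulVec,
        herm_vecMul hSinv_herm]
    rw [h1]
    have hne : S⁻¹ *ᵥ u ≠ 0 := by
      intro h0
      apply hu
      have h2 : S *ᵥ (S⁻¹ *ᵥ u) = u := by
        rw [Matrix.mulVec_mulVec, hS_mul_inv, one_mulVec]
      rw [h0, mulVec_zero] at h2
      exact h2.symm
    simpa [star_trivial] using hB.dotProduct_mulVec_pos hne
  have hCev : ∀ i, 0 < hCherm.eigenvalues i := fun i => hCpd.eigenvalues_pos i
  have hCinv : C⁻¹ = hCherm.cfc (fun x => x⁻¹) := by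
    conv_lhs => rw [spectral hCherm]
    exact cfc_inv hCherm id (fun i => (hCev i).ne')
  have hBeq : B = S * C * S := by
    rw [hCdef]
    simp only [← mul_assoc]
    rw [hS_mul_inv, one_mul]
    simp only [mul_assoc]
    rw [hS_inv_mul, mul_one]
  have hBinv : B⁻¹ = S⁻¹ * C⁻¹ * S⁻¹ := by
    rw [hBeq, Matrix.mul_inv_rev, Matrix.mul_inv_rev, ← mul_assoc]
  have hAinv : A⁻¹ = S⁻¹ * 1 * S⁻¹ := by
    rw [← hSS, Matrix.mul_inv_rev, mul_one]
  set φ := fun x : ℝ => (1 - t) + t * x⁻¹ with hφdef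
  set ψ := fun x : ℝ => (φ x)⁻¹ with hψdef
  have hφpos : ∀ i, 0 < φ (hCherm.eigenvalues i) := by
    intro i
    have hx : 0 < (hCherm.eigenvalues i)⁻¹ := inv_pos.2 (hCev i)
    rcases eq_or_lt_of_le ht0 with h | h
    · simp only [hφdef, ← h]
      norm_num
    · have h3 := mul_pos h hx
      simp only [hφdef]
      nlinarith
  set W := (1 - t) • A⁻¹ + t • B⁻¹ with hWdef
  have hW : W = S⁻¹ * hCherm.cfc φ * S⁻¹ := by
    rw [hWdef, hAinv, hBinv, comb_sandwich, ← cfc_one' hCherm, hCinv, cfc_comb hCherm,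
      cfc_congr' hCherm (g := φ) (fun i => by simp [hφdef])]
  have hcfcφ_inv : (hCherm.cfc φ)⁻¹ = hCherm.cfc ψ := cfc_inv hCherm φ (fun i => (hφpos i).ne')
  have hSinv_inv : (S⁻¹)⁻¹ = S := Matrix.inv_eq_right_inv hS_inv_mul
  have hWinv : W⁻¹ = S * (hCherm.cfc ψ * S) := by
    rw [hW, Matrix.mul_inv_rev, Matrix.mul_inv_rev, hSinv_inv, hcfcφ_inv]
  have harm_eq : harmPath A B t = W⁻¹ := rfl
  have hgeo : geoPath A B t = S * hCherm.cfc (fun x : ℝ => x ^ t) * S := by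
    show msqrt A * mpow ((msqrt A)⁻¹ * B * (msqrt A)⁻¹) t * msqrt A = _
    rw [← hSnote, ← hCdef]
    show S * cfc (fun x : ℝ => x ^ t) C * S = _
    rw [hCherm.cfc_eq]
  have hψ_nonneg : ∀ i, 0 ≤ ψ (hCherm.eigenvalues i) := fun i => (inv_pos.2 (hφpos i)).le
  have harm_psd : (W⁻¹).PosSemidef := by
    rw [hWinv, ← mul_assoc]
    exact conj_sandwich_psd (cfc_psd hCherm ψ hψ_nonneg) hS_herm
  have geo_psd : (geoPath A B t).PosSemidef := by
    rw [hgeo]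
    exact conj_sandwich_psd (cfc_psd hCherm _ (fun i => Real.rpow_nonneg (hCev i).le t)) hS_herm
  have hAMGM : ∀ i, ψ (hCherm.eigenvalues i) ≤ hCherm.eigenvalues i ^ t := by
    intro i
    have hx := hCev i
    set x := hCherm.eigenvalues i
    have h1 : x ^ (-t) ≤ φ x := by
      have h2 := Real.geom_mean_le_arith_mean2_weighted (by linarith : (0:ℝ) ≤ 1 - t) ht0
        zero_le_one (inv_pos.2 hx).le (by ring)
      calc x ^ (-t) = 1 ^ (1 - t) * x⁻¹ ^ t := by
            rw [Real.one_rpow, one_mul, Real.inv_rpow hx.le, Real.rpow_neg hx.le]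
      _ ≤ (1 - t) * 1 + t * x⁻¹ := h2
      _ = φ x := by simp [hφdef]
    have h4 : (φ x)⁻¹ ≤ (x ^ (-t))⁻¹ := by
      have h5 : (0:ℝ) < x ^ (-t) := Real.rpow_pos_of_pos hx _
      gcongr
    calc ψ x = (φ x)⁻¹ := by simp [hψdef]
    _ ≤ (x ^ (-t))⁻¹ := h4
    _ = x ^ t := by rw [Real.rpow_neg hx.le, inv_inv]
  have key1 : lamMin (harmPath A B t) ≤ lamMin (geoPath A B t) := by
    rw [harm_eq]
    apply lamMin_mono harm_psd
    have hdiff : S * hCherm.cfc (fun x => 1 * x ^ t + (-1) * ψ x) * S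
        = geoPath A B t - W⁻¹ := by
      rw [← cfc_comb hCherm 1 (-1) (fun x : ℝ => x ^ t) ψ, ← comb_sandwich, hgeo, hWinv,
        ← mul_assoc]
      simp [sub_eq_add_neg]
    rw [← hdiff]
    refine conj_sandwich_psd (cfc_psd hCherm _ (fun i => ?_)) hS_herm
    have h6 := hAMGM i
    simp only [one_mul, neg_one_mul]
    linarith
  -- part 2
  have hlamA_pos : 0 < lamMin A := by
    have hμpos : 0 < Finset.univ.inf' Finset.univ_nonempty hAh.eigenvalues :=
      (Finset.lt_inf'_iff _).2 (fun i _ => hAev i)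
    exact lt_of_lt_of_le hμpos (le_lamMin (fun u hu =>
      eigen_le_quadform hAh (fun i => Finset.inf'_le _ (Finset.mem_univ i)) hu))
  have hlamB_pos : 0 < lamMin B := by
    have hμpos : 0 < Finset.univ.inf' Finset.univ_nonempty hBh.eigenvalues :=
      (Finset.lt_inf'_iff _).2 (fun i _ => hBev i)
    exact lt_of_lt_of_le hμpos (le_lamMin (fun u hu =>
      eigen_le_quadform hBh (fun i => Finset.inf'_le _ (Finset.mem_univ i)) hu))
  set m := min (lamMin A) (lamMin B) with hmdef
  have hm_pos : 0 < m := lt_min hlamA_pos hlamB_pos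
  have hmA : ∀ i, m ≤ hAh.eigenvalues i :=
    fun i => le_trans (min_le_left _ _) (lamMin_le_eigen hAh hA.posSemidef i)
  have hmB : ∀ i, m ≤ hBh.eigenvalues i :=
    fun i => le_trans (min_le_right _ _) (lamMin_le_eigen hBh hB.posSemidef i)
  have hAinv_cfc : A⁻¹ = hAh.cfc (fun x => x⁻¹) := by
    conv_lhs => rw [spectral hAh]
    exact cfc_inv hAh id (fun i => (hAev i).ne')
  have hBinv_cfc : B⁻¹ = hBh.cfc (fun x => x⁻¹) := by
    conv_lhs => rw [spectral hBh]
    exact cfc_inv hBh id (fun i => (hBev i).ne')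
  have hpsdA : ((1/m) • (1 : Matrix (Fin k) (Fin k) ℝ) - A⁻¹).PosSemidef := by
    rw [hAinv_cfc, ← cfc_one' hAh, sub_eq_add_neg, ← neg_one_smul ℝ (hAh.cfc _),
      cfc_comb hAh]
    refine cfc_psd hAh _ (fun i => ?_)
    have h7 : (hAh.eigenvalues i)⁻¹ ≤ m⁻¹ := by
      apply inv_anti₀ hm_pos (hmA i)
    simp only [one_div]
    nlinarith
  have hpsdB : ((1/m) • (1 : Matrix (Fin k) (Fin k) ℝ) - B⁻¹).PosSemidef := by
    rw [hBinv_cfc, ← cfc_one' hBh, sub_eq_add_neg, ← neg_one_smul ℝ (hBh.cfc _),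
      cfc_comb hBh]
    refine cfc_psd hBh _ (fun i => ?_)
    have h7 : (hBh.eigenvalues i)⁻¹ ≤ m⁻¹ := by
      apply inv_anti₀ hm_pos (hmB i)
    simp only [one_div]
    nlinarith
  have hWle : ((1/m) • (1 : Matrix (Fin k) (Fin k) ℝ) - W).PosSemidef := by
    have hsplit : (1/m) • (1 : Matrix (Fin k) (Fin k) ℝ) - W
        = (1-t) • ((1/m) • (1 : Matrix (Fin k) (Fin k) ℝ) - A⁻¹)
          + t • ((1/m) • (1 : Matrix (Fin k) (Fin k) ℝ) - B⁻¹) := by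
      rw [hWdef]
      module
    rw [hsplit]
    exact (psd_smul hpsdA (by linarith)).add (psd_smul hpsdB ht0)
  have hW_psd : W.PosSemidef := by
    rw [hW]
    exact conj_sandwich_psd (cfc_psd hCherm φ (fun i => (hφpos i).le)) hSinv_herm
  have hWWinv : W * W⁻¹ = 1 := by
    rw [hWinv, hW]
    simp only [mul_assoc]
    rw [← mul_assoc S⁻¹ S, hS_inv_mul, one_mul, ← mul_assoc (hCherm.cfc φ) (hCherm.cfc ψ),
      cfc_mul' hCherm,
      cfc_congr' hCherm (g := fun _ => 1) (fun i => mul_inv_cancel₀ (hφpos i).ne'),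
      cfc_one' hCherm, one_mul, hS_inv_mul]
  have key2 : m ≤ lamMin (harmPath A B t) := by
    rw [harm_eq]
    apply le_lamMin
    intro u hu
    have hr0 : 0 ≤ u ⬝ᵥ W⁻¹ *ᵥ u := rayleigh_nonneg harm_psd u
    have hcs := cs_psd hW_psd u (W⁻¹ *ᵥ u)
    have h1 : u ⬝ᵥ W *ᵥ (W⁻¹ *ᵥ u) = u ⬝ᵥ u := by
      rw [Matrix.mulVec_mulVec, hWWinv, one_mulVec]
    have h2 : (W⁻¹ *ᵥ u) ⬝ᵥ W *ᵥ (W⁻¹ *ᵥ u) = u ⬝ᵥ W⁻¹ *ᵥ u := by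
      conv_lhs => rw [Matrix.mulVec_mulVec, hWWinv, one_mulVec]
      rw [dotProduct_comm]
    rw [h1, h2, hu] at hcs
    have h3 : u ⬝ᵥ W *ᵥ u ≤ 1/m := by
      have h9 := rayleigh_nonneg hWle u
      have hexp : u ⬝ᵥ ((1/m) • (1 : Matrix (Fin k) (Fin k) ℝ) - W) *ᵥ u
          = 1/m - u ⬝ᵥ W *ᵥ u := by
        rw [sub_mulVec, dotProduct_sub, smul_mulVec, one_mulVec, dotProduct_smul, hu]
        simp
      linarith [hexp ▸ h9]
    have h10 : m * (u ⬝ᵥ W *ᵥ u) ≤ 1 := by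
      have := mul_le_mul_of_nonneg_left h3 hm_pos.le
      rwa [mul_one_div, div_self hm_pos.ne'] at this
    nlinarith [hcs, hr0, rayleigh_nonneg hW_psd u]
  exact ⟨key1, key2⟩
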